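/- arXiv:2504.16029 — 4 statements merged into one kernel-verified Lean document; each statement's English description precedes it below -/
import Mathlib

section
/- For every symmetric traceless real 3×3 matrix Q, one has tr(Q³) ≤ (1/√6)·(tr(Q²))^{3/2}, with equality if and only if Q = s·(n nᵀ − I/3) for some s ≥ 0 and some unit vector n ∈ ℝ³. -/
open Matrix

lemma trace_pow_eq {n : Type*} [Fintype n] [DecidableEq n]
    (Q : Matrix n n ℝ) (hQ : Q.IsHermitian) (k : ℕ) :
    Matrix.trace (Q ^ k) = ∑ i, hQ.eigenvalues i ^ k := by
  have hU := (Matrix.mem_unitaryGroup_iff').mp (hQ.eigenvectorUnitary).2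
  have hU2 := (Matrix.mem_unitaryGroup_iff).mp (hQ.eigenvectorUnitary).2
  set U := (hQ.eigenvectorUnitary : Matrix n n ℝ) with hUdef
  set ev := hQ.eigenvalues with hev
  have hspec : Q = U * Matrix.diagonal ev * star U := by
    have := hQ.spectral_theorem
    simpa [Function.comp_def] using this
  have hpow : Q ^ k = U * (Matrix.diagonal ev) ^ k * star U := by
    induction k with
    | zero => simp [pow_zero, hU2]
    | succ k ih =>
      rw [pow_succ, ih]
      conv_lhs => rw [hspec]
      calc U * Matrix.diagonal ev ^ k * star U * (U * Matrix.diagonal ev * star U)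
          = U * Matrix.diagonal ev ^ k * (star U * U) * Matrix.diagonal ev * star U := by
            simp only [Matrix.mul_assoc]
        _ = U * Matrix.diagonal ev ^ (k+1) * star U := by
            rw [hU, Matrix.mul_one, pow_succ]
            simp only [Matrix.mul_assoc]
  rw [hpow, Matrix.trace_mul_comm, ← Matrix.mul_assoc, hU, Matrix.one_mul,
    Matrix.diagonal_pow, Matrix.trace_diagonal]
  simp [Pi.pow_apply]

lemma rpow_three_halves {p : ℝ} (hp : 0 ≤ p) : p ^ ((3:ℝ)/2) = Real.sqrt p ^ 3 := by
  rw [show ((3:ℝ)/2) = (1/2:ℝ) * ((3:ℕ):ℝ) by norm_num, Real.rpow_mul hp,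
    Real.rpow_natCast, ← Real.sqrt_eq_rpow]

lemma scalar_ineq (a b c : ℝ) (h : a + b + c = 0) :
    a^3 + b^3 + c^3 ≤ (1 / Real.sqrt 6) * Real.sqrt (a^2+b^2+c^2) ^ 3 := by
  have hc : c = -(a+b) := by linarith
  subst hc
  set p : ℝ := a^2+b^2+(-(a+b))^2 with hp
  have hp0 : 0 ≤ p := by positivity
  set r := Real.sqrt p with hrdef
  have hr : r ^ 2 = p := Real.sq_sqrt hp0
  have hr0 : 0 ≤ r := Real.sqrt_nonneg _
  set u := Real.sqrt 6 with hudef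
  have hu : u ^ 2 = 6 := Real.sq_sqrt (by norm_num)
  have hu0 : 0 < u := Real.sqrt_pos.mpr (by norm_num)
  rw [div_mul_eq_mul_div, one_mul, le_div_iff₀ hu0]
  set X : ℝ := a*b*(-(a+b)) with hX
  have h54 : 54 * X^2 + 2*((a-b)*(2*a+b)*(a+2*b))^2 = p^3 := by rw [hX, hp]; ring
  have hsq : (3*X*u)^2 ≤ (r^3)^2 := by
    have e1 : (3*X*u)^2 = 54 * X^2 := by linear_combination 9*X^2*hu
    have e2 : (r^3)^2 = p^3 := by linear_combination (r^4 + r^2*p + p^2) * hr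
    nlinarith [sq_nonneg ((a-b)*(2*a+b)*(a+2*b))]
  have hfin : 3*X*u ≤ r^3 :=
    calc 3*X*u ≤ |3*X*u| := le_abs_self _
      _ = Real.sqrt ((3*X*u)^2) := (Real.sqrt_sq_eq_abs _).symm
      _ ≤ Real.sqrt ((r^3)^2) := Real.sqrt_le_sqrt hsq
      _ = r^3 := Real.sqrt_sq (by positivity)
  calc (a^3+b^3+(-(a+b))^3) * u = 3*X*u := by rw [hX]; ring
    _ ≤ r^3 := hfin

lemma symm_trace_sq_zero {m : Type*} [Fintype m] (A : Matrix m m ℝ) (hsym : Aᵀ = A)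
    (h : Matrix.trace (A * A) = 0) : A = 0 := by
  have hs : ∀ i j, A j i = A i j := fun i j => congrFun (congrFun hsym i) j
  have key : ∑ i, ∑ j, (A i j)^2 = 0 := by
    rw [Matrix.trace] at h
    calc ∑ i, ∑ j, A i j ^ 2 = ∑ i, ∑ j, A i j * A j i := by
          refine Finset.sum_congr rfl fun i _ => Finset.sum_congr rfl fun j _ => ?_
          rw [sq, hs i j]
      _ = 0 := by
          rw [← h]
          refine Finset.sum_congr rfl fun i _ => ?_
          simp [Matrix.diag, Matrix.mul_apply]
  ext i j
  have h1 := (Finset.sum_eq_zero_iff_of_nonneg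
    (fun i _ => Finset.sum_nonneg fun j _ => sq_nonneg (A i j))).mp key i (Finset.mem_univ i)
  have h2 := (Finset.sum_eq_zero_iff_of_nonneg (fun j _ => sq_nonneg (A i j))).mp h1 j
    (Finset.mem_univ j)
  simpa using pow_eq_zero_iff (two_ne_zero) |>.mp h2

lemma symm_sq_zero {m : Type*} [Fintype m] (A : Matrix m m ℝ) (hsym : Aᵀ = A)
    (h : A * A = 0) : A = 0 :=
  symm_trace_sq_zero A hsym (by rw [h, Matrix.trace_zero])

lemma proj_rank_one {m : Type*} [Fintype m] [DecidableEq m]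
    (P : Matrix m m ℝ) (hsym : Pᵀ = P) (hidem : P * P = P) (htr : Matrix.trace P = 1) :
    ∃ n : m → ℝ, n ⬝ᵥ n = 1 ∧ P = Matrix.vecMulVec n n := by
  have hs : ∀ i j, P j i = P i j := fun i j => congrFun (congrFun hsym i) j
  have hdiag : ∀ i, P i i = ∑ k, (P i k)^2 := by
    intro i
    conv_lhs => rw [← hidem]
    rw [Matrix.mul_apply]
    exact Finset.sum_congr rfl fun k _ => by rw [sq, hs i k]
  have hex : ∃ i, 0 < P i i := by
    by_contra hcon
    push_neg at hcon
    have : Matrix.trace P ≤ 0 := by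
      rw [Matrix.trace]
      exact Finset.sum_nonpos fun i _ => hcon i
    linarith
  obtain ⟨i, hi⟩ := hex
  set r := Real.sqrt (P i i) with hrdef
  have hr0 : 0 < r := Real.sqrt_pos.mpr hi
  have hr2 : r^2 = P i i := Real.sq_sqrt hi.le
  set n : m → ℝ := fun j => P j i / r with hn
  have hcol : ∀ j, ∑ k, P j k * P k i = P j i := by
    intro j
    conv_rhs => rw [← hidem]
    rw [Matrix.mul_apply]
  have hsumsq : ∑ k, (P k i)^2 = P i i := by
    rw [hdiag i]
    exact Finset.sum_congr rfl fun k _ => by rw [hs i k]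
  have hnn : n ⬝ᵥ n = 1 := by
    rw [dotProduct]
    have : ∑ j, n j * n j = (∑ j, (P j i)^2) / r^2 := by
      rw [Finset.sum_div]
      exact Finset.sum_congr rfl fun j _ => by rw [hn]; field_simp
    rw [this, hsumsq, hr2, div_self (ne_of_gt hi)]
  refine ⟨n, hnn, ?_⟩
  have hPvec : ∀ j, ∑ l, P j l * n l = n j := by
    intro j
    calc ∑ l, P j l * n l = (∑ l, P j l * P l i) / r := by
          rw [Finset.sum_div]
          exact Finset.sum_congr rfl fun l _ => by simp only [hn]; ring
      _ = n j := by rw [hcol j]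
  have h1 : P * Matrix.vecMulVec n n = Matrix.vecMulVec n n := by
    ext j k
    rw [Matrix.mul_apply]
    simp only [Matrix.vecMulVec_apply]
    calc ∑ l, P j l * (n l * n k) = (∑ l, P j l * n l) * n k := by
          rw [Finset.sum_mul]
          exact Finset.sum_congr rfl fun l _ => by ring
      _ = n j * n k := by rw [hPvec j]
  have h2 : Matrix.vecMulVec n n * P = Matrix.vecMulVec n n := by
    ext j k
    rw [Matrix.mul_apply]
    simp only [Matrix.vecMulVec_apply]
    calc ∑ l, n j * n l * P l k = n j * ∑ l, P k l * n l := by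
          rw [Finset.mul_sum]
          exact Finset.sum_congr rfl fun l _ => by rw [hs k l]; ring
      _ = n j * n k := by rw [hPvec k]
  have h3 : Matrix.vecMulVec n n * Matrix.vecMulVec n n = Matrix.vecMulVec n n := by
    ext j k
    rw [Matrix.mul_apply]
    simp only [Matrix.vecMulVec_apply]
    calc ∑ l, n j * n l * (n l * n k) = (n ⬝ᵥ n) * (n j * n k) := by
          rw [dotProduct, Finset.sum_mul]
          exact Finset.sum_congr rfl fun l _ => by ring
      _ = n j * n k := by rw [hnn, one_mul]
  have hMsym : (P - Matrix.vecMulVec n n)ᵀ = P - Matrix.vecMulVec n n := by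
    ext j k
    simp only [Matrix.transpose_apply, Matrix.sub_apply, Matrix.vecMulVec_apply, hs j k]
    ring
  have hMM : (P - Matrix.vecMulVec n n) * (P - Matrix.vecMulVec n n) =
      P - Matrix.vecMulVec n n := by
    rw [Matrix.sub_mul, Matrix.mul_sub, Matrix.mul_sub, hidem, h1, h2, h3]
    abel
  have hMtr : Matrix.trace (P - Matrix.vecMulVec n n) = 0 := by
    rw [Matrix.trace_sub, htr]
    have : Matrix.trace (Matrix.vecMulVec n n) = n ⬝ᵥ n := by
      simp [Matrix.trace, Matrix.diag, Matrix.vecMulVec_apply, dotProduct]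
    rw [this, hnn, sub_self]
  have hM0 : P - Matrix.vecMulVec n n = 0 := by
    apply symm_trace_sq_zero _ hMsym
    rw [hMM, hMtr]
  rw [← sub_eq_zero]
  exact hM0

set_option maxHeartbeats 1000000 in
lemma CH3 (a b d e f : ℝ) (M : Matrix (Fin 3) (Fin 3) ℝ)
    (hM : M = !![a,d,e;d,b,f;e,f,-a-b]) :
    M*M*M = (Matrix.trace (M*M)/2) • M + M.det • (1 : Matrix (Fin 3) (Fin 3) ℝ) := by
  subst hM
  rw [Matrix.mul_fin_three, Matrix.mul_fin_three, Matrix.trace_fin_three_of,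
    Matrix.det_fin_three]
  ext i j
  fin_cases i <;> fin_cases j <;>
    simp [Matrix.one_apply] <;> ring

set_option maxHeartbeats 1000000 in
lemma fin3_package (Q : Matrix (Fin 3) (Fin 3) ℝ) (hsym : Qᵀ = Q)
    (htr : Matrix.trace Q = 0) :
    Matrix.trace (Q*Q*Q) = 3 * Q.det ∧
    Q*Q*Q = (Matrix.trace (Q*Q)/2) • Q + Q.det • (1 : Matrix (Fin 3) (Fin 3) ℝ) ∧
    0 ≤ Matrix.trace (Q*Q) ∧
    (Matrix.trace (Q*Q) = 0 → Q = 0) := by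
  have e10 : Q 1 0 = Q 0 1 := congrFun (congrFun hsym 0) 1
  have e20 : Q 2 0 = Q 0 2 := congrFun (congrFun hsym 0) 2
  have e21 : Q 2 1 = Q 1 2 := congrFun (congrFun hsym 1) 2
  have htr' : Q 0 0 + Q 1 1 + Q 2 2 = 0 := by
    simpa [Matrix.trace, Matrix.diag, Fin.sum_univ_three] using htr
  have hQM : Q = !![Q 0 0, Q 0 1, Q 0 2; Q 0 1, Q 1 1, Q 1 2;
      Q 0 2, Q 1 2, -Q 0 0 - Q 1 1] := by
    ext i j
    fin_cases i <;> fin_cases j <;>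
      simp [e10, e20, e21] <;> linarith [htr']
  have hp_expr : Matrix.trace (Q*Q) = Q 0 0^2 + Q 1 1^2 + (-Q 0 0 - Q 1 1)^2
      + 2*(Q 0 1)^2 + 2*(Q 0 2)^2 + 2*(Q 1 2)^2 := by
    conv_lhs => rw [hQM]
    rw [Matrix.mul_fin_three, Matrix.trace_fin_three_of]
    ring
  refine ⟨?_, CH3 _ _ _ _ _ _ hQM, ?_, ?_⟩
  · conv_lhs => rw [hQM]
    rw [Matrix.mul_fin_three, Matrix.mul_fin_three, Matrix.trace_fin_three_of]
    conv_rhs => rw [hQM]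
    rw [Matrix.det_fin_three]
    norm_num [Matrix.cons_val_zero, Matrix.cons_val_one]
    simp [Matrix.vecHead, Matrix.vecTail]
    ring
  · rw [hp_expr]; positivity
  · intro hzero
    rw [hp_expr] at hzero
    have h00 : Q 0 0 = 0 := by nlinarith [sq_nonneg (Q 0 0), sq_nonneg (Q 1 1), sq_nonneg (-Q 0 0 - Q 1 1), sq_nonneg (Q 0 1), sq_nonneg (Q 0 2), sq_nonneg (Q 1 2)]
    have h11 : Q 1 1 = 0 := by nlinarith [sq_nonneg (Q 0 0), sq_nonneg (Q 1 1), sq_nonneg (-Q 0 0 - Q 1 1), sq_nonneg (Q 0 1), sq_nonneg (Q 0 2), sq_nonneg (Q 1 2)]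
    have h01 : Q 0 1 = 0 := by nlinarith [sq_nonneg (Q 0 0), sq_nonneg (Q 1 1), sq_nonneg (-Q 0 0 - Q 1 1), sq_nonneg (Q 0 1), sq_nonneg (Q 0 2), sq_nonneg (Q 1 2)]
    have h02 : Q 0 2 = 0 := by nlinarith [sq_nonneg (Q 0 0), sq_nonneg (Q 1 1), sq_nonneg (-Q 0 0 - Q 1 1), sq_nonneg (Q 0 1), sq_nonneg (Q 0 2), sq_nonneg (Q 1 2)]
    have h12 : Q 1 2 = 0 := by nlinarith [sq_nonneg (Q 0 0), sq_nonneg (Q 1 1), sq_nonneg (-Q 0 0 - Q 1 1), sq_nonneg (Q 0 1), sq_nonneg (Q 0 2), sq_nonneg (Q 1 2)]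
    rw [hQM, h00, h11, h01, h02, h12]
    ext i j
    fin_cases i <;> fin_cases j <;> norm_num

set_option maxHeartbeats 1000000 in
lemma rev_traces (s : ℝ) (n : Fin 3 → ℝ) (hn : n ⬝ᵥ n = 1) :
    Matrix.trace ((s • (Matrix.vecMulVec n n - (1/3:ℝ) • 1)) * (s • (Matrix.vecMulVec n n - (1/3:ℝ) • 1))) = 2/3 * s^2 ∧
    Matrix.trace ((s • (Matrix.vecMulVec n n - (1/3:ℝ) • 1)) * (s • (Matrix.vecMulVec n n - (1/3:ℝ) • 1)) * (s • (Matrix.vecMulVec n n - (1/3:ℝ) • 1))) = 2/9 * s^3 := by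
  have hn' : n 0 * n 0 + n 1 * n 1 + n 2 * n 2 = 1 := by
    simpa [dotProduct, Fin.sum_univ_three] using hn
  constructor
  · simp only [Matrix.trace_fin_three, Matrix.mul_apply, Fin.sum_univ_three,
      Matrix.smul_apply, Matrix.sub_apply, Matrix.vecMulVec_apply, Matrix.one_apply,
      smul_eq_mul]
    norm_num [Fin.ext_iff]
    linear_combination (s^2*(n 0 * n 0 + n 1 * n 1 + n 2 * n 2) + s^2/3) * hn'
  · simp only [Matrix.trace_fin_three, Matrix.mul_apply, Fin.sum_univ_three,
      Matrix.smul_apply, Matrix.sub_apply, Matrix.vecMulVec_apply, Matrix.one_apply,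
      smul_eq_mul]
    norm_num [Fin.ext_iff]
    linear_combination (s^3*((n 0 * n 0 + n 1 * n 1 + n 2 * n 2)^2 + 1/3)) * hn'

/-- For every symmetric traceless real 3×3 matrix `Q`,
`tr(Q³) ≤ (1/√6) (tr(Q²))^{3/2}`, with equality iff `Q = s • (n nᵀ - I/3)` for some
`s ≥ 0` and some unit vector `n ∈ ℝ³`. -/
theorem stmt2 (Q : Matrix (Fin 3) (Fin 3) ℝ) (hsym : Qᵀ = Q) (htr : Matrix.trace Q = 0) :
    Matrix.trace (Q * Q * Q) ≤ (1 / Real.sqrt 6) * (Matrix.trace (Q * Q)) ^ ((3 : ℝ) / 2) ∧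
    (Matrix.trace (Q * Q * Q) = (1 / Real.sqrt 6) * (Matrix.trace (Q * Q)) ^ ((3 : ℝ) / 2) ↔
      ∃ (s : ℝ) (n : Fin 3 → ℝ), 0 ≤ s ∧ n ⬝ᵥ n = 1 ∧
        Q = s • (Matrix.vecMulVec n n - (1 / 3 : ℝ) • 1)) := by
  obtain ⟨h3d, hCH, hp0, hzero⟩ := fin3_package Q hsym htr
  have hherm : Q.IsHermitian := by
    rwa [Matrix.IsHermitian, Matrix.conjTranspose_eq_transpose_of_trivial]
  have hev1 : hherm.eigenvalues 0 + hherm.eigenvalues 1 + hherm.eigenvalues 2 = 0 := by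
    have := trace_pow_eq Q hherm 1
    simp only [pow_one, Fin.sum_univ_three] at this
    linarith [this ▸ htr]
  have hev2 : Matrix.trace (Q*Q) = hherm.eigenvalues 0 ^2 + hherm.eigenvalues 1 ^2
      + hherm.eigenvalues 2 ^2 := by
    have := trace_pow_eq Q hherm 2
    rw [pow_two] at this
    rw [this, Fin.sum_univ_three]
  have hev3 : Matrix.trace (Q*Q*Q) = hherm.eigenvalues 0 ^3 + hherm.eigenvalues 1 ^3
      + hherm.eigenvalues 2 ^3 := by
    have := trace_pow_eq Q hherm 3
    rw [show Q^3 = Q*Q*Q by rw [pow_succ, pow_two]] at this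
    rw [this, Fin.sum_univ_three]
  have hrpow : (Matrix.trace (Q*Q)) ^ ((3:ℝ)/2) = Real.sqrt (Matrix.trace (Q*Q)) ^ 3 :=
    rpow_three_halves hp0
  constructor
  · rw [hev3, hrpow, hev2]
    exact scalar_ineq _ _ _ hev1
  constructor
  · -- forward: equality → exists
    intro heq
    set p := Matrix.trace (Q*Q) with hpdef
    set t := Real.sqrt (p/6) with htdef
    have ht0 : 0 ≤ t := Real.sqrt_nonneg _
    have ht2 : t^2 = p/6 := Real.sq_sqrt (by positivity)
    have hp6 : p = 6*t^2 := by linarith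
    have hu2 : (Real.sqrt 6)^2 = 6 := Real.sq_sqrt (by norm_num)
    have hu0 : (0:ℝ) < Real.sqrt 6 := Real.sqrt_pos.mpr (by norm_num)
    have hsqrtp : Real.sqrt p = Real.sqrt 6 * t := by
      rw [hp6, show (6:ℝ)*t^2 = (Real.sqrt 6*t)^2 by rw [mul_pow, hu2],
        Real.sqrt_sq (by positivity)]
    have hdet : Q.det = 2*t^3 := by
      have h1 : Matrix.trace (Q*Q*Q) = 6 * t^3 := by
        rw [heq, hrpow, hsqrtp]
        field_simp
        linear_combination t^3 * hu2
      rw [h3d] at h1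
      linarith
    have hCH' : Q*Q*Q = (3*t^2) • Q + (2*t^3) • (1 : Matrix (Fin 3) (Fin 3) ℝ) := by
      rw [hCH, hdet, show p/2 = 3*t^2 by linarith]
    set A := Q*Q - t • Q - (2*t^2) • (1 : Matrix (Fin 3) (Fin 3) ℝ) with hA
    have hAQ : A * Q = (-t) • A := by
      rw [hA, Matrix.sub_mul, Matrix.sub_mul, Matrix.smul_mul, Matrix.smul_mul,
        Matrix.one_mul, hCH']
      module
    have hAA : A * A = 0 := by
      have h1 : A * (Q*Q) = (t^2) • A := by
        calc A * (Q*Q) = (A * Q) * Q := by rw [Matrix.mul_assoc]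
          _ = ((-t) • A) * Q := by rw [hAQ]
          _ = (-t) • (A * Q) := by rw [Matrix.smul_mul]
          _ = (-t) • ((-t) • A) := by rw [hAQ]
          _ = (t^2) • A := by rw [smul_smul]; module
      calc A * A = A * (Q*Q) - t • (A * Q) - (2*t^2) • (A * 1) := by
            nth_rewrite 2 [hA]
            rw [Matrix.mul_sub, Matrix.mul_sub, Matrix.mul_smul, Matrix.mul_smul]
        _ = (t^2) • A - t • ((-t) • A) - (2*t^2) • A := by
            rw [h1, hAQ, Matrix.mul_one]
        _ = 0 := by module
    have hAsym : Aᵀ = A := by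
      rw [hA, Matrix.transpose_sub, Matrix.transpose_sub, Matrix.transpose_smul,
        Matrix.transpose_smul, Matrix.transpose_mul, hsym, Matrix.transpose_one]
    have hA0 : A = 0 := symm_sq_zero A hAsym hAA
    have hQQ : Q*Q = t • Q + (2*t^2) • (1 : Matrix (Fin 3) (Fin 3) ℝ) := by
      have h := hA0
      rw [hA, sub_sub, sub_eq_zero] at h
      exact h
    rcases eq_or_lt_of_le ht0 with htz | htpos
    · -- t = 0 : Q = 0
      have hQ0 : Q = 0 := hzero (by rw [hp6, ← htz]; norm_num)
      refine ⟨0, ![1,0,0], le_refl 0, ?_, ?_⟩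
      · simp [dotProduct, Fin.sum_univ_three]
      · rw [hQ0, zero_smul]
    · -- t > 0
      set P := (3*t)⁻¹ • (Q + t • (1 : Matrix (Fin 3) (Fin 3) ℝ)) with hP
      have ht' : (3*t) ≠ 0 := by positivity
      have hXX : (Q + t • (1 : Matrix (Fin 3) (Fin 3) ℝ)) * (Q + t • 1) =
          (3*t) • (Q + t • (1 : Matrix (Fin 3) (Fin 3) ℝ)) := by
        rw [Matrix.add_mul, Matrix.mul_add, Matrix.mul_add, hQQ, Matrix.smul_mul,
          Matrix.mul_smul, Matrix.mul_smul, Matrix.one_mul, Matrix.mul_one,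
          Matrix.mul_one]
        module
      have hPP : P * P = P := by
        rw [hP, Matrix.smul_mul, Matrix.mul_smul, hXX, smul_smul, smul_smul]
        congr 1
        field_simp
      have hPsym : Pᵀ = P := by
        rw [hP, Matrix.transpose_smul, Matrix.transpose_add, hsym, Matrix.transpose_smul,
          Matrix.transpose_one]
      have hPtr : Matrix.trace P = 1 := by
        rw [hP, Matrix.trace_smul, Matrix.trace_add, Matrix.trace_smul, htr,
          Matrix.trace_one]
        simp only [smul_eq_mul]
        norm_num
        field_simp
      obtain ⟨n, hn, hPn⟩ := proj_rank_one P hPsym hPP hPtr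
      refine ⟨3*t, n, by positivity, hn, ?_⟩
      have h3tP : (3*t) • P = Q + t • (1 : Matrix (Fin 3) (Fin 3) ℝ) := by
        rw [hP, smul_smul, show (3*t) * (3*t)⁻¹ = 1 by field_simp, one_smul]
      rw [smul_sub, ← hPn, h3tP, smul_smul, show (3*t) * (1/3 : ℝ) = t by ring]
      abel
  · -- reverse: exists → equality
    rintro ⟨s, n, hs, hn, hQeq⟩
    obtain ⟨ht2, ht3⟩ := rev_traces s n hn
    rw [hQeq, ht2, ht3, rpow_three_halves (by positivity)]
    have hsq : Real.sqrt (2/3 * s^2) = Real.sqrt (2/3) * s := by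
      rw [Real.sqrt_mul (by norm_num : (0:ℝ) ≤ 2/3), Real.sqrt_sq hs]
    rw [hsq]
    set u := Real.sqrt 6 with hu
    set v := Real.sqrt (2/3) with hv
    have hu2 : u^2 = 6 := Real.sq_sqrt (by norm_num)
    have hv2 : v^2 = 2/3 := Real.sq_sqrt (by norm_num)
    have hu0 : (0:ℝ) < u := Real.sqrt_pos.mpr (by norm_num)
    have hvu : v * u = 2 := by
      rw [hv, hu, ← Real.sqrt_mul (by norm_num : (0:ℝ) ≤ 2/3),
        show (2/3:ℝ)*6 = 4 by norm_num, show (4:ℝ) = 2^2 by norm_num,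
        Real.sqrt_sq (by norm_num)]
    have h3v : 3 * v = u := by
      have h := mul_left_cancel₀ (ne_of_gt hu0)
        (show u * (3*v) = u * u by linear_combination 3*hvu - hu2)
      linarith [h]
    rw [← h3v]
    field_simp
    linear_combination (-9*s^3) * hv2
end

section
/- Let B, C > 0 and A = B²/(27C). Then f_B(Q) ≥ 0 for every symmetric traceless real 3×3 matrix Q, and f_B(Q) = 0 if and only if Q = 0 or Q = (B/(3C))·(n nᵀ − I/3) for some unit vector n ∈ ℝ³. In other words, at the nematic–isotropic transition temperature the bulk potential is minimised exactly by the isotropic phase and the continuum of uniaxial states with scalar order parameter s = B/(3C). -/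
open Matrix

namespace Stmt6Aux

/-- trace is invariant under unitary conjugation -/
lemma trace_conj (U M : Matrix (Fin 3) (Fin 3) ℝ) (hU : star U * U = 1) :
    Matrix.trace (U * M * star U) = Matrix.trace M := by
  rw [Matrix.trace_mul_cycle, hU, Matrix.one_mul]

lemma conj_mul_conj (U M N : Matrix (Fin 3) (Fin 3) ℝ) (hU : star U * U = 1) :
    (U * M * star U) * (U * N * star U) = U * (M * N) * star U := by
  have h : star U * (U * (N * star U)) = N * star U := by
    rw [← Matrix.mul_assoc, hU, Matrix.one_mul]
  simp only [Matrix.mul_assoc, h]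

/-- discriminant inequality for three reals summing to zero -/
lemma disc_ineq (a b c : ℝ) (h : a + b + c = 0) :
    6 * (a^3 + b^3 + c^3)^2 ≤ (a^2 + b^2 + c^2)^3 := by
  have hc : c = -a - b := by linarith
  subst hc
  nlinarith [sq_nonneg ((a - b) * (b - (-a - b)) * (a - (-a - b)))]

/-- each of a,b,c is a root of the monic cubic with roots a,b,c -/
lemma root_cubic (a b c : ℝ) (h : a + b + c = 0) :
    a^3 - ((a^2+b^2+c^2)/2) * a - (a^3+b^3+c^3)/3 = 0 := by
  have hc : c = -a - b := by linarith
  subst hc; ring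

lemma scalar_nonneg (s p q : ℝ) (hp : 0 ≤ p) (hdisc : 6 * q^2 ≤ p^3)
    (hq0 : p = 0 → q = 0) :
    0 ≤ 2 * s^2 * p - 12 * s * q + 3 * p^2 := by
  rcases eq_or_lt_of_le hp with h0 | h0
  · have := hq0 h0.symm
    simp [← h0, this]
  · have hid : p * (2 * s^2 * p - 12 * s * q + 3 * p^2)
        = 2 * (s * p - 3 * q)^2 + 3 * (p^3 - 6 * q^2) := by ring
    have h1 : 0 ≤ p * (2 * s^2 * p - 12 * s * q + 3 * p^2) := by
      rw [hid]; nlinarith [sq_nonneg (s * p - 3 * q)]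
    by_contra hneg
    push_neg at hneg
    nlinarith

lemma scalar_eq (s p q : ℝ) (hs : 0 < s) (hdisc : 6 * q^2 ≤ p^3)
    (hG : 2 * s^2 * p - 12 * s * q + 3 * p^2 = 0) :
    (p = 0 ∧ q = 0) ∨ (p = 2 * s^2 / 3 ∧ q = 2 * s^3 / 9) := by
  have key : (2 * s^2 * p - 3 * p^2)^2
      = 24 * s^2 * (6 * q^2 - p^3)
        + (2 * s^2 * p + 3 * p^2 + 12 * s * q) * (2 * s^2 * p - 12 * s * q + 3 * p^2) := by
    ring
  rw [hG, mul_zero, add_zero] at key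
  have h1 : (2 * s^2 * p - 3 * p^2)^2 ≤ 0 := by nlinarith [sq_nonneg s]
  have h2 : 2 * s^2 * p - 3 * p^2 = 0 := by nlinarith [sq_nonneg (2 * s^2 * p - 3 * p^2)]
  have h3 : p * (2 * s^2 - 3 * p) = 0 := by linarith [h2]
  rcases mul_eq_zero.mp h3 with hp0 | hp2
  · left
    refine ⟨hp0, ?_⟩
    have h4 : 12 * s * q = 0 := by rw [hp0] at hG; linarith
    have h12 : (12 : ℝ) * s ≠ 0 := by positivity
    exact (mul_eq_zero.mp h4).elim (fun h => absurd h h12) id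
  · right
    have hpval : p = 2 * s^2 / 3 := by linarith
    refine ⟨hpval, ?_⟩
    have h12 : (12 : ℝ) * s ≠ 0 := by positivity
    have h5 : 12 * s * q = 12 * s * (2 * s^3 / 9) := by
      rw [hpval] at hG; ring_nf; ring_nf at hG; linarith
    exact mul_left_cancel₀ h12 h5

lemma root_choice (s x y z : ℝ) (hsum : x + y + z = 0)
    (hp2 : x^2 + y^2 + z^2 = 2 * s^2 / 3) (hq2 : x^3 + y^3 + z^3 = 2 * s^3 / 9) :
    x = 2 * s / 3 ∨ x = -s / 3 := by
  have h := root_cubic x y z hsum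
  rw [hp2, hq2] at h
  have hfac : (x - 2 * s / 3) * (x + s / 3)^2 = 0 := by linear_combination h
  rcases mul_eq_zero.mp hfac with h1 | h1
  · left; linarith
  · right
    have h2 : x + s / 3 = 0 := by
      exact pow_eq_zero_iff (by norm_num : (2:ℕ) ≠ 0) |>.mp h1
    linarith

/-- unitary conjugation of the special diagonal matrix gives the uniaxial form -/
lemma recon (U : Matrix (Fin 3) (Fin 3) ℝ) (hU2 : U * star U = 1) (s : ℝ) (k₀ : Fin 3) :
    U * diagonal (fun i => if i = k₀ then 2 * s / 3 else -s / 3) * star U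
      = s • (vecMulVec (fun j => U j k₀) (fun j => U j k₀) - (1/3 : ℝ) • 1) := by
  have hdiag : (diagonal (fun i => if i = k₀ then 2 * s / 3 else -s / 3) :
      Matrix (Fin 3) (Fin 3) ℝ)
      = s • (diagonal (fun i => if i = k₀ then (1:ℝ) else 0) - (1/3 : ℝ) • 1) := by
    ext i j
    rcases eq_or_ne i j with rfl | hij
    · rcases eq_or_ne i k₀ with rfl | hik
      · simp [Matrix.diagonal_apply, Matrix.one_apply]; ring
      · simp [Matrix.diagonal_apply, Matrix.one_apply, hik]; ring
    · simp [Matrix.diagonal_apply, hij, Matrix.one_apply]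
  rw [hdiag, Matrix.mul_smul, Matrix.smul_mul]
  congr 1
  rw [Matrix.mul_sub, Matrix.sub_mul]
  congr 1
  · ext i j
    simp only [Matrix.mul_apply, Matrix.diagonal_apply, vecMulVec_apply]
    simp only [mul_ite, mul_one, mul_zero, ite_mul, zero_mul, Finset.sum_ite_eq',
      Finset.mem_univ, if_true, Matrix.star_apply, star_trivial]
  · rw [Matrix.mul_smul, Matrix.mul_one, Matrix.smul_mul, hU2]

lemma vecMulVec_idem (n : Fin 3 → ℝ) (hn : n ⬝ᵥ n = 1) :
    vecMulVec n n * vecMulVec n n = vecMulVec n n := by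
  ext i j
  simp only [Matrix.mul_apply, vecMulVec_apply]
  calc ∑ k, n i * n k * (n k * n j) = (n i * n j) * ∑ k, n k * n k := by
        rw [Finset.mul_sum]; exact Finset.sum_congr rfl fun k _ => by ring
    _ = n i * n j := by rw [show ∑ k, n k * n k = 1 from hn, mul_one]

lemma trace_vecMulVec' (n : Fin 3 → ℝ) (hn : n ⬝ᵥ n = 1) :
    Matrix.trace (vecMulVec n n) = 1 := by
  have hn' : n 0 * n 0 + n 1 * n 1 + n 2 * n 2 = 1 := by
    simpa [dotProduct, Fin.sum_univ_three] using hn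
  simp [Matrix.trace, Matrix.diag, vecMulVec_apply, Fin.sum_univ_three]
  linarith

lemma uniaxial_traces (s : ℝ) (n : Fin 3 → ℝ) (hn : n ⬝ᵥ n = 1) :
    Matrix.trace ((s • (vecMulVec n n - (1/3 : ℝ) • 1)) * (s • (vecMulVec n n - (1/3 : ℝ) • 1)))
      = s^2 * (2/3) ∧
    Matrix.trace ((s • (vecMulVec n n - (1/3 : ℝ) • 1)) * (s • (vecMulVec n n - (1/3 : ℝ) • 1))
        * (s • (vecMulVec n n - (1/3 : ℝ) • 1))) = s^3 * (2/9) := by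
  set N := vecMulVec n n with hN
  have hNN : N * N = N := vecMulVec_idem n hn
  have htrN : Matrix.trace N = 1 := trace_vecMulVec' n hn
  set M : Matrix (Fin 3) (Fin 3) ℝ := N - (1/3 : ℝ) • 1 with hM
  have hMM : M * M = (1/3 : ℝ) • N + (1/9 : ℝ) • 1 := by
    simp only [hM, sub_mul, mul_sub, hNN, mul_smul_comm, smul_mul_assoc, mul_one, one_mul,
      smul_smul]
    module
  have hMMM : M * M * M = (1/3 : ℝ) • N - (1/27 : ℝ) • 1 := by
    rw [show M * M * M = (M * M) * M from rfl, hMM]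
    simp only [hM, add_mul, sub_mul, mul_sub, smul_mul_assoc, mul_smul_comm, hNN, mul_one,
      one_mul, smul_smul, smul_sub]
    module
  have htr1 : Matrix.trace (1 : Matrix (Fin 3) (Fin 3) ℝ) = 3 := by
    simp [Matrix.trace_one]
  constructor
  · rw [smul_mul_smul_comm, hMM]
    simp [Matrix.trace_smul, Matrix.trace_add, htrN, htr1, smul_eq_mul]
    ring
  · have hQ3 : (s • M) * (s • M) * (s • M) = (s * s * s) • (M * M * M) := by
      simp only [smul_mul_assoc, mul_smul_comm, smul_smul]
      ring_nf
    rw [hQ3, hMMM]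
    simp only [Matrix.trace_smul, Matrix.trace_sub, Matrix.trace_smul, htrN, htr1, smul_eq_mul]
    ring

lemma fG (A B C p q : ℝ) (hC : 0 < C) (hA : A = B ^ 2 / (27 * C)) :
    A / 2 * p - B / 3 * q + C / 4 * p ^ 2
      = C / 12 * (2 * (B / (3 * C)) ^ 2 * p - 12 * (B / (3 * C)) * q + 3 * p ^ 2) := by
  subst hA
  have : C ≠ 0 := ne_of_gt hC
  field_simp
  ring

end Stmt6Aux

set_option maxHeartbeats 1000000 in
theorem stmt6 (A B C : ℝ) (hB : 0 < B) (hC : 0 < C) (hA : A = B ^ 2 / (27 * C)) :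
    ∀ Q : Matrix (Fin 3) (Fin 3) ℝ, Qᵀ = Q → Matrix.trace Q = 0 →
      ((A / 2) * Matrix.trace (Q * Q) - (B / 3) * Matrix.trace (Q * Q * Q)
          + (C / 4) * (Matrix.trace (Q * Q)) ^ 2 ≥ 0) ∧
      ((A / 2) * Matrix.trace (Q * Q) - (B / 3) * Matrix.trace (Q * Q * Q)
          + (C / 4) * (Matrix.trace (Q * Q)) ^ 2 = 0 ↔
        Q = 0 ∨ ∃ n : Fin 3 → ℝ, n ⬝ᵥ n = 1 ∧
          Q = (B / (3 * C)) • (Matrix.vecMulVec n n - (1 / 3 : ℝ) • 1)) := by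
  intro Q hsym htr
  have hCne : C ≠ 0 := ne_of_gt hC
  -- backward direction first (before spectral machinery)
  have mpr : (Q = 0 ∨ ∃ n : Fin 3 → ℝ, n ⬝ᵥ n = 1 ∧
      Q = (B / (3 * C)) • (Matrix.vecMulVec n n - (1 / 3 : ℝ) • 1)) →
      (A / 2) * Matrix.trace (Q * Q) - (B / 3) * Matrix.trace (Q * Q * Q)
          + (C / 4) * (Matrix.trace (Q * Q)) ^ 2 = 0 := by
    rintro (rfl | ⟨n, hn, rfl⟩)
    · simp
    · obtain ⟨h2, h3⟩ := Stmt6Aux.uniaxial_traces (B / (3 * C)) n hn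
      rw [h2, h3, hA]
      field_simp
      ring
  -- spectral decomposition
  have hQ : Q.IsHermitian := by
    ext i j
    have h' : Q j i = Q i j := by
      simpa [Matrix.transpose_apply] using congrFun (congrFun hsym i) j
    simp [Matrix.conjTranspose_apply, h']
  obtain ⟨U, hUdef⟩ : ∃ U' : Matrix (Fin 3) (Fin 3) ℝ,
      (hQ.eigenvectorUnitary : Matrix (Fin 3) (Fin 3) ℝ) = U' := ⟨_, rfl⟩
  obtain ⟨lam, hlamdef⟩ : ∃ l : Fin 3 → ℝ, hQ.eigenvalues = l := ⟨_, rfl⟩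
  have hUmem := Unitary.mem_iff.mp hQ.eigenvectorUnitary.2
  rw [hUdef] at hUmem
  obtain ⟨hU1, hU2⟩ := hUmem
  have hspec : Q = U * diagonal lam * star U := by
    have h := hQ.spectral_theorem
    rw [Unitary.conjStarAlgAut_apply, hUdef] at h
    simpa [Function.comp, hlamdef] using h
  have htrD : ∀ d : Fin 3 → ℝ,
      Matrix.trace (U * diagonal d * star U) = d 0 + d 1 + d 2 := by
    intro d
    rw [Stmt6Aux.trace_conj U _ hU1, Matrix.trace_diagonal]
    exact Fin.sum_univ_three d
  have hsum : lam 0 + lam 1 + lam 2 = 0 := by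
    rw [hspec, htrD] at htr; exact htr
  have hQ2 : Q * Q = U * (diagonal lam * diagonal lam) * star U := by
    conv_lhs => rw [hspec]
    exact Stmt6Aux.conj_mul_conj _ _ _ hU1
  have hQ3 : Q * Q * Q = U * (diagonal lam * diagonal lam * diagonal lam) * star U := by
    rw [hQ2]
    conv_lhs => rw [hspec]
    exact Stmt6Aux.conj_mul_conj _ _ _ hU1
  have hp : Matrix.trace (Q * Q) = lam 0 ^ 2 + lam 1 ^ 2 + lam 2 ^ 2 := by
    rw [hQ2, Matrix.diagonal_mul_diagonal, htrD]
    try simp only [Pi.mul_apply]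
    ring
  have hq : Matrix.trace (Q * Q * Q) = lam 0 ^ 3 + lam 1 ^ 3 + lam 2 ^ 3 := by
    rw [hQ3, Matrix.diagonal_mul_diagonal, Matrix.diagonal_mul_diagonal, htrD]
    try simp only [Pi.mul_apply]
    ring
  obtain ⟨s, hsdef⟩ : ∃ s' : ℝ, B / (3 * C) = s' := ⟨_, rfl⟩
  have hs : 0 < s := by rw [← hsdef]; positivity
  have hdisc : 6 * (lam 0 ^ 3 + lam 1 ^ 3 + lam 2 ^ 3) ^ 2
      ≤ (lam 0 ^ 2 + lam 1 ^ 2 + lam 2 ^ 2) ^ 3 := Stmt6Aux.disc_ineq _ _ _ hsum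
  have hppos : 0 ≤ lam 0 ^ 2 + lam 1 ^ 2 + lam 2 ^ 2 := by positivity
  have hlamzero : lam 0 ^ 2 + lam 1 ^ 2 + lam 2 ^ 2 = 0 → ∀ i : Fin 3, lam i = 0 := by
    intro h i
    have h0 : lam 0 = 0 := by
      have := sq_nonneg (lam 1); have := sq_nonneg (lam 2)
      have h00 : lam 0 ^ 2 = 0 := by nlinarith
      exact pow_eq_zero_iff (by norm_num : (2:ℕ) ≠ 0) |>.mp h00
    have h1 : lam 1 = 0 := by
      have := sq_nonneg (lam 0); have := sq_nonneg (lam 2)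
      have h11 : lam 1 ^ 2 = 0 := by nlinarith
      exact pow_eq_zero_iff (by norm_num : (2:ℕ) ≠ 0) |>.mp h11
    have h2 : lam 2 = 0 := by
      have := sq_nonneg (lam 0); have := sq_nonneg (lam 1)
      have h22 : lam 2 ^ 2 = 0 := by nlinarith
      exact pow_eq_zero_iff (by norm_num : (2:ℕ) ≠ 0) |>.mp h22
    fin_cases i <;> assumption
  have hq0 : lam 0 ^ 2 + lam 1 ^ 2 + lam 2 ^ 2 = 0 →
      lam 0 ^ 3 + lam 1 ^ 3 + lam 2 ^ 3 = 0 := by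
    intro h
    have h' := hlamzero h
    rw [h' 0, h' 1, h' 2]; ring
  have hfG : A / 2 * (lam 0 ^ 2 + lam 1 ^ 2 + lam 2 ^ 2)
      - B / 3 * (lam 0 ^ 3 + lam 1 ^ 3 + lam 2 ^ 3)
      + C / 4 * (lam 0 ^ 2 + lam 1 ^ 2 + lam 2 ^ 2) ^ 2
      = C / 12 * (2 * s ^ 2 * (lam 0 ^ 2 + lam 1 ^ 2 + lam 2 ^ 2)
        - 12 * s * (lam 0 ^ 3 + lam 1 ^ 3 + lam 2 ^ 3)
        + 3 * (lam 0 ^ 2 + lam 1 ^ 2 + lam 2 ^ 2) ^ 2) := by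
    have h := Stmt6Aux.fG A B C (lam 0 ^ 2 + lam 1 ^ 2 + lam 2 ^ 2)
      (lam 0 ^ 3 + lam 1 ^ 3 + lam 2 ^ 3) hC hA
    rwa [hsdef] at h
  have hGnn := Stmt6Aux.scalar_nonneg s _ _ hppos hdisc hq0
  constructor
  · rw [ge_iff_le, hp, hq, hfG]
    have : (0:ℝ) ≤ C / 12 := by positivity
    exact mul_nonneg this hGnn
  constructor
  · intro h0
    rw [hp, hq, hfG] at h0
    have hG0 : 2 * s ^ 2 * (lam 0 ^ 2 + lam 1 ^ 2 + lam 2 ^ 2)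
        - 12 * s * (lam 0 ^ 3 + lam 1 ^ 3 + lam 2 ^ 3)
        + 3 * (lam 0 ^ 2 + lam 1 ^ 2 + lam 2 ^ 2) ^ 2 = 0 := by
      have hcne : C / 12 ≠ 0 := by positivity
      exact (mul_eq_zero.mp h0).resolve_left hcne
    rcases Stmt6Aux.scalar_eq s _ _ hs hdisc hG0 with ⟨hp0, -⟩ | ⟨hp2, hq2⟩
    · left
      have h' := hlamzero hp0
      have hlz : lam = (0 : Fin 3 → ℝ) := funext fun i => h' i
      have hd0 : (diagonal (0 : Fin 3 → ℝ) : Matrix (Fin 3) (Fin 3) ℝ) = 0 := by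
        ext i j; simp [Matrix.diagonal_apply]
      rw [hspec, hlz, hd0, Matrix.mul_zero, Matrix.zero_mul]
    · right
      have h0' := Stmt6Aux.root_choice s (lam 0) (lam 1) (lam 2) hsum hp2 hq2
      have h1' := Stmt6Aux.root_choice s (lam 1) (lam 2) (lam 0)
        (by linarith) (by linarith) (by linarith)
      have h2' := Stmt6Aux.root_choice s (lam 2) (lam 0) (lam 1)
        (by linarith) (by linarith) (by linarith)
      have hk : ∃ k₀ : Fin 3, lam = fun i => if i = k₀ then 2 * s / 3 else -s / 3 := by
        rcases h0' with h0' | h0' <;> rcases h1' with h1' | h1' <;> rcases h2' with h2' | h2'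
        · exfalso; linarith
        · exfalso; linarith
        · exfalso; linarith
        · exact ⟨0, funext fun i => by fin_cases i <;> simp [h0', h1', h2']⟩
        · exfalso; linarith
        · exact ⟨1, funext fun i => by fin_cases i <;> simp [h0', h1', h2']⟩
        · exact ⟨2, funext fun i => by fin_cases i <;> simp [h0', h1', h2']⟩
        · exfalso; linarith
      obtain ⟨k₀, hkdesc⟩ := hk
      refine ⟨fun j => U j k₀, ?_, ?_⟩
      · have hone := congrFun (congrFun hU1 k₀) k₀
        simp only [Matrix.mul_apply, Matrix.one_apply, if_pos rfl, Matrix.star_apply,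
          star_trivial] at hone
        simpa [dotProduct] using hone
      · rw [hspec, hkdesc, ← hsdef]
        exact Stmt6Aux.recon U hU2 (B / (3 * C)) k₀
  · exact mpr
end

section
/- Let B, C > 0 and let A > B²/(24C) (the nematic super-heating temperature). Then the only symmetric traceless real 3×3 matrix Q satisfying A·Q − B·(Q² − (tr(Q²)/3)·I) + C·tr(Q²)·Q = 0 is Q = 0; that is, the isotropic state is the unique critical point of the bulk potential above the super-heating temperature. -/
open Matrix

/-- For `B, C > 0` and `A > B²/(24C)` (above the nematic super-heating
temperature), the only symmetric traceless real 3×3 matrix `Q` satisfying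
`A Q - B (Q² - (tr(Q²)/3) I) + C tr(Q²) Q = 0` is `Q = 0`. -/
theorem stmt8 (A B C : ℝ) (hB : 0 < B) (hC : 0 < C) (hA : A > B ^ 2 / (24 * C)) :
    ∀ Q : Matrix (Fin 3) (Fin 3) ℝ, Qᵀ = Q → Matrix.trace Q = 0 →
      A • Q - B • (Q * Q - (Matrix.trace (Q * Q) / 3) • 1)
          + (C * Matrix.trace (Q * Q)) • Q = 0 →
      Q = 0 := by
  intro Q hsym htr heq
  have hs : ∀ i j, Q j i = Q i j := by
    intro i j
    conv_lhs => rw [← hsym]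
    rfl
  set r := Matrix.trace (Q * Q) with hr
  have htr' : Q 0 0 + Q 1 1 + Q 2 2 = 0 := by
    have := htr
    simp [Matrix.trace, Fin.sum_univ_three, Matrix.diag] at this
    linarith
  have hc : Q 2 2 = -Q 0 0 - Q 1 1 := by linarith
  have hr_sq : r = ∑ i : Fin 3, ∑ j : Fin 3, (Q i j)^2 := by
    simp only [hr, Matrix.trace, Matrix.diag, Matrix.mul_apply, Fin.sum_univ_three]
    rw [hs 0 1, hs 0 2, hs 1 2]
    ring
  by_contra hQ
  have hrnn : 0 ≤ r := by
    rw [hr_sq]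
    positivity
  have hrpos : 0 < r := by
    rcases hrnn.lt_or_eq with h | h
    · exact h
    · exfalso; apply hQ
      ext i j
      have hsum : ∑ i : Fin 3, ∑ j : Fin 3, (Q i j)^2 = 0 := by rw [← hr_sq, ← h]
      have h1 : ∀ i ∈ Finset.univ, (0:ℝ) ≤ ∑ j : Fin 3, (Q i j)^2 := by
        intro i _; positivity
      have h2 := (Finset.sum_eq_zero_iff_of_nonneg h1).mp hsum i (Finset.mem_univ i)
      have h3 : ∀ j ∈ Finset.univ, (0:ℝ) ≤ (Q i j)^2 := by intro j _; positivity
      have h4 := (Finset.sum_eq_zero_iff_of_nonneg h3).mp h2 j (Finset.mem_univ j)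
      simpa using pow_eq_zero_iff (n := 2) (by norm_num) |>.mp h4
  set μ := (A + C * r) / B with hμ
  have hBμ : B * μ = A + C * r := by
    rw [hμ]; field_simp
  have hX : B • (Q * Q - (r / 3) • (1 : Matrix (Fin 3) (Fin 3) ℝ)) = A • Q + (C * r) • Q := by
    have h2 : A • Q + (C * r) • Q - B • (Q * Q - (r / 3) • (1 : Matrix (Fin 3) (Fin 3) ℝ)) = 0 := by
      rw [← heq]; abel
    exact (sub_eq_zero.mp h2).symm
  have h1' : B • (Q * Q) = (A + C * r) • Q + (B * (r / 3)) • (1 : Matrix (Fin 3) (Fin 3) ℝ) := by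
    have e : B • (Q * Q) = B • (Q * Q - (r / 3) • (1 : Matrix (Fin 3) (Fin 3) ℝ))
        + (B * (r / 3)) • (1 : Matrix (Fin 3) (Fin 3) ℝ) := by
      rw [smul_sub, smul_smul]; abel
    rw [e, hX, ← add_smul]
  have h1 : Q * Q = μ • Q + (r / 3) • (1 : Matrix (Fin 3) (Fin 3) ℝ) := by
    apply smul_right_injective (Matrix (Fin 3) (Fin 3) ℝ) hB.ne'
    show B • (Q * Q) = B • (μ • Q + (r / 3) • (1 : Matrix (Fin 3) (Fin 3) ℝ))
    rw [smul_add, smul_smul, smul_smul, hBμ]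
    exact h1'
  -- trace of Q^4 via h1
  have htr4 : Matrix.trace (Q * Q * (Q * Q)) = μ^2 * r + r^2 / 3 := by
    rw [h1]
    simp only [add_mul, mul_add, smul_mul_assoc, mul_smul_comm, smul_smul, one_mul, mul_one,
      Matrix.trace_add, Matrix.trace_smul, Matrix.trace_one, htr, ← hr, smul_eq_mul,
      Fintype.card_fin]
    push_cast
    ring
  -- trace of Q^4 via entries
  have htr4' : Matrix.trace (Q * Q * (Q * Q)) = r^2 / 2 := by
    rw [hr]
    simp only [Matrix.trace, Matrix.diag, Matrix.mul_apply, Fin.sum_univ_three]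
    rw [hs 0 1, hs 0 2, hs 1 2, hc]
    ring
  have h6 : μ^2 * r = (r / 6) * r := by linear_combination htr4' - htr4
  have hμ2 : μ^2 = r / 6 := mul_right_cancel₀ hrpos.ne' h6
  have key : (A + C * r)^2 = B^2 * r / 6 := by
    have h := hμ2
    rw [hμ, div_pow, div_eq_iff (by positivity : (B:ℝ)^2 ≠ 0)] at h
    rw [h]; ring
  have h24 : B^2 < 24 * C * A := by
    rw [gt_iff_lt, div_lt_iff₀ (by positivity)] at hA
    linarith
  nlinarith [sq_nonneg (A - C * r), mul_pos (show (0:ℝ) < 24 * C * A - B^2 by linarith) hrpos]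
end

section
/- Fix real numbers ξ ≠ 0, μ₀ > 0, c > 0, and ε₀ > 0. For a symmetric real 3×3 matrix ε with ε₃₃ ≠ 0, define the Berreman matrix M(ε) as the 4×4 real matrix with rows: (−(ε₁₃/ε₃₃)ξ, μ₀c(ε₃₃ − ξ²)/ε₃₃, −(ε₂₃/ε₃₃)ξ, 0); (ε₀c(ε₁₁ − ε₁₃²/ε₃₃), −(ε₁₃/ε₃₃)ξ, ε₀c(ε₁₂ − ε₁₃ε₂₃/ε₃₃), 0); (0, 0, 0, μ₀c); (ε₀c(ε₁₂ − ε₁₃ε₂₃/ε₃₃), −(ε₂₃/ε₃₃)ξ, ε₀c(ε₂₂ − ε₂₃²/ε₃₃ − ξ²), 0). Then the map ε ↦ M(ε) is injective on the set of symmetric real 3×3 matrices with nonzero (3,3) entry; that is, ε is uniquely determined by its Berreman matrix M. -/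
open Matrix

/-- For fixed `ξ ≠ 0`, `μ₀ > 0`, `c > 0`, `ε₀ > 0`, the map sending a
symmetric real 3×3 dielectric tensor `ε` (with `ε₃₃ ≠ 0`) to its 4×4 Berreman matrix
`M(ε)` is injective on the set of symmetric real 3×3 matrices with nonzero (3,3) entry;
that is, `ε` is uniquely determined by `M`. -/
theorem stmt14 (ξ μ₀ c ε₀ : ℝ) (hξ : ξ ≠ 0) (hμ₀ : 0 < μ₀) (hc : 0 < c) (hε₀ : 0 < ε₀)
    (M : Matrix (Fin 3) (Fin 3) ℝ → Matrix (Fin 4) (Fin 4) ℝ)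
    (hM : ∀ ε : Matrix (Fin 3) (Fin 3) ℝ, M ε =
      !![-(ε 0 2 / ε 2 2) * ξ, μ₀ * c * (ε 2 2 - ξ ^ 2) / ε 2 2, -(ε 1 2 / ε 2 2) * ξ, 0;
         ε₀ * c * (ε 0 0 - ε 0 2 ^ 2 / ε 2 2), -(ε 0 2 / ε 2 2) * ξ,
           ε₀ * c * (ε 0 1 - ε 0 2 * ε 1 2 / ε 2 2), 0;
         0, 0, 0, μ₀ * c;
         ε₀ * c * (ε 0 1 - ε 0 2 * ε 1 2 / ε 2 2), -(ε 1 2 / ε 2 2) * ξ,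
           ε₀ * c * (ε 1 1 - ε 1 2 ^ 2 / ε 2 2 - ξ ^ 2), 0]) :
    Set.InjOn M {ε : Matrix (Fin 3) (Fin 3) ℝ | εᵀ = ε ∧ ε 2 2 ≠ 0} := by
  rintro ε ⟨hεs, hε33⟩ η ⟨hηs, hη33⟩ h
  rw [hM, hM] at h
  have hc' : c ≠ 0 := ne_of_gt hc
  have hμ' : μ₀ ≠ 0 := ne_of_gt hμ₀
  have hε₀' : ε₀ ≠ 0 := ne_of_gt hε₀
  have h01 := congr_fun (congr_fun h 0) 1
  have h00 := congr_fun (congr_fun h 0) 0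
  have h02 := congr_fun (congr_fun h 0) 2
  have h10 := congr_fun (congr_fun h 1) 0
  have h12 := congr_fun (congr_fun h 1) 2
  have h32 := congr_fun (congr_fun h 3) 2
  simp only [Matrix.cons_val', Matrix.cons_val_zero, Matrix.cons_val_one, Matrix.head_cons,
    Matrix.empty_val', Matrix.cons_val_fin_one, Matrix.head_fin_const, Matrix.of_apply,
    Matrix.cons_val_two, Matrix.tail_cons, Matrix.cons_val_three] at h01 h00 h02 h10 h12 h32
  -- ε 2 2 = η 2 2
  have e22 : ε 2 2 = η 2 2 := by
    field_simp at h01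
    have h3 : μ₀ * c * ξ ^ 2 * (ε 2 2 - η 2 2) = 0 := by linear_combination (μ₀ * c) * h01
    have h4 : ε 2 2 - η 2 2 = 0 := by
      rcases mul_eq_zero.mp h3 with h | h
      · exact absurd h (by positivity)
      · exact h
    linarith
  have e02 : ε 0 2 = η 0 2 := by
    rw [e22] at h00
    field_simp at h00
    linarith
  have e12 : ε 1 2 = η 1 2 := by
    rw [e22] at h02
    field_simp at h02
    linarith
  have e00 : ε 0 0 = η 0 0 := by
    rw [e22, e02] at h10
    field_simp at h10
    exact mul_right_cancel₀ hη33 (by linarith)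
  have e01 : ε 0 1 = η 0 1 := by
    rw [e22, e02, e12] at h12
    field_simp at h12
    exact mul_right_cancel₀ hη33 (by linarith)
  have e11 : ε 1 1 = η 1 1 := by
    rw [e22, e12] at h32
    field_simp at h32
    exact mul_right_cancel₀ hη33 (by linarith)
  have e20 : ε 2 0 = η 2 0 := by
    have h1 := congr_fun (congr_fun hεs 0) 2
    have h2 := congr_fun (congr_fun hηs 0) 2
    simp [Matrix.transpose_apply] at h1 h2
    rw [h1, h2]; exact e02
  have e21 : ε 2 1 = η 2 1 := by
    have h1 := congr_fun (congr_fun hεs 1) 2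
    have h2 := congr_fun (congr_fun hηs 1) 2
    simp [Matrix.transpose_apply] at h1 h2
    rw [h1, h2]; exact e12
  have e10 : ε 1 0 = η 1 0 := by
    have h1 := congr_fun (congr_fun hεs 0) 1
    have h2 := congr_fun (congr_fun hηs 0) 1
    simp [Matrix.transpose_apply] at h1 h2
    rw [h1, h2]; exact e01
  ext i j
  fin_cases i <;> fin_cases j <;>
    simp [e00, e01, e02, e10, e11, e12, e20, e21, e22]
end
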